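/- Let k be an algebraically closed field of characteristic p > 0 and q a power of p. Let L be a free ℤ-module of finite rank with injective homomorphism λ: L → ℝ, and let E = k((L))_λ be the associated monomial field with valuation v_λ. Suppose x ∈ E cannot be written as a^q − a for any a ∈ E. Then there exists c > 0 such that for every nonnegative integer i and every y ∈ E with x − y + y^q supported on q^i·L, we have v_λ(x − y + y^q) ≤ −c·q^i. -/

import Mathlib

/-- Membership in the monomial field `E = k((L))_λ`, viewed inside the field of
Hahn series over `ℝ`: the support lies in `λ(L)` and, for each `r ∈ ℝ`, only
finitely many support elements are `≤ r`. -/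
def InMonomialField {k : Type*} [Field k] {L : Type*} [AddCommGroup L]
    (Λ : L →+ ℝ) (x : HahnSeries ℝ k) : Prop :=
  x.support ⊆ Set.range Λ ∧ ∀ r : ℝ, (x.support ∩ Set.Iic r).Finite

open HahnSeries Set

namespace Stmt5Aux

/-- A subset of `ℝ` all of whose `Iic`-truncations are finite is PWO. -/
lemma isPWO_of_iic_finite {A : Set ℝ} (h : ∀ r : ℝ, (A ∩ Set.Iic r).Finite) :
    A.IsPWO := by
  apply Set.IsWF.isPWO
  rw [Set.isWF_iff_no_descending_seq]
  intro g hg hmem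
  have hinj : Function.Injective g := hg.injective
  have : (A ∩ Set.Iic (g 0)).Infinite :=
    Set.infinite_of_injective_forall_mem hinj
      (fun n => ⟨hmem n, hg.antitone (Nat.zero_le n)⟩)
  exact this (h (g 0))

/-- Existence of a minimum for a nonempty set with finite `Iic`-truncations. -/
lemma exists_min_of_iic_finite {A : Set ℝ} (h : ∀ r : ℝ, (A ∩ Set.Iic r).Finite)
    (hne : A.Nonempty) : ∃ m ∈ A, ∀ s ∈ A, m ≤ s := by
  obtain ⟨a, ha⟩ := hne
  have hfin : (A ∩ Set.Iic a).Finite := h a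
  have hne' : (A ∩ Set.Iic a).Nonempty := ⟨a, ha, le_refl a⟩
  obtain ⟨m, hm, hmin⟩ := Set.exists_min_image _ id hfin hne'
  refine ⟨m, hm.1, fun s hs => ?_⟩
  by_cases hsa : s ≤ a
  · exact hmin s ⟨hs, hsa⟩
  · exact le_trans (hmin a ⟨ha, le_refl a⟩) (not_le.mp hsa).le

/-- A finite-support `ℕ`-indexed sum equals first term plus shifted sum. -/
lemma finsum_nat_shift {k : Type*} [AddCommGroup k] (h : ℕ → k)
    (hfin : (Function.support h).Finite) :
    ∑ᶠ n, h n = h 0 + ∑ᶠ n, h (n + 1) := by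
  obtain ⟨N, hN⟩ : ∃ N : ℕ, ∀ n, h n ≠ 0 → n < N := by
    refine ⟨hfin.toFinset.sup id + 1, fun n hn => ?_⟩
    have : n ∈ hfin.toFinset := hfin.mem_toFinset.mpr hn
    exact Nat.lt_succ_of_le (Finset.le_sup (f := id) this)
  have h1 : ∑ᶠ n, h n = ∑ n ∈ Finset.range (N + 1), h n := by
    apply finsum_eq_sum_of_support_subset
    intro n hn
    simp only [Finset.coe_range, Set.mem_Iio]
    exact Nat.lt_succ_of_lt (hN n hn)
  have h2 : ∑ᶠ n, h (n + 1) = ∑ n ∈ Finset.range N, h (n + 1) := by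
    apply finsum_eq_sum_of_support_subset
    intro n hn
    simp only [Finset.coe_range, Set.mem_Iio]
    have := hN _ hn
    omega
  rw [h1, h2, Finset.sum_range_succ', add_comm]

end Stmt5Aux

namespace Stmt5Aux

variable {p : ℕ} [Fact p.Prime] {k : Type*} [Field k] [CharP k p]

instance : CharP (HahnSeries ℝ k) p :=
  charP_of_injective_ringHom (HahnSeries.C_injective (Γ := ℝ) (R := k)) p

instance : ExpChar (HahnSeries ℝ k) p := .prime Fact.out
instance : ExpChar k p := .prime Fact.out

lemma coeff_sum {α : Type*} (F : Finset α) (f : α → HahnSeries ℝ k) (t : ℝ) :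
    (∑ s ∈ F, f s).coeff t = ∑ s ∈ F, (f s).coeff t :=
  map_sum (coeff.addMonoidHom t) f F

lemma add_pow_q {q e : ℕ} (hqe : q = p ^ e) (a b : HahnSeries ℝ k) :
    (a + b) ^ q = a ^ q + b ^ q := by subst hqe; exact add_pow_char_pow a b p e

lemma sum_pow_q {q e : ℕ} (hqe : q = p ^ e) {α : Type*} (F : Finset α)
    (f : α → HahnSeries ℝ k) : (∑ s ∈ F, f s) ^ q = ∑ s ∈ F, (f s) ^ q := by
  subst hqe; exact sum_pow_char_pow (p := p) (n := e) F f

lemma sum_pow_q_k {q e : ℕ} (hqe : q = p ^ e) {α : Type*} (F : Finset α)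
    (f : α → k) : (∑ s ∈ F, f s) ^ q = ∑ s ∈ F, (f s) ^ q := by
  subst hqe; exact sum_pow_char_pow (p := p) (n := e) F f

lemma neg_pow_q {q e : ℕ} (hqe : q = p ^ e) (a : HahnSeries ℝ k) :
    (-a) ^ q = -(a ^ q) := by
  subst hqe
  have := map_neg (iterateFrobenius (HahnSeries ℝ k) p e) a
  simpa [iterateFrobenius_def] using this

lemma neg_pow_q_k {q e : ℕ} (hqe : q = p ^ e) (a : k) : (-a) ^ q = -(a ^ q) := by
  subst hqe
  have := map_neg (iterateFrobenius k p e) a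
  simpa [iterateFrobenius_def] using this

lemma coeff_pow_q {q e : ℕ} (hqe : q = p ^ e) (x : HahnSeries ℝ k)
    (hfin : ∀ r : ℝ, (x.support ∩ Set.Iic r).Finite) (g : ℝ) :
    (x ^ q).coeff g = (x.coeff (g / q)) ^ q := by
  have hq0 : 0 < q := hqe ▸ pow_pos (Nat.Prime.pos Fact.out) e
  have hqR : (0 : ℝ) < q := by exact_mod_cast hq0
  have hqne : (q : ℝ) ≠ 0 := ne_of_gt hqR
  obtain ⟨b, hb0, hbg, hbgq⟩ : ∃ b : ℝ, 0 < b ∧ g < b ∧ g / q < b := by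
    refine ⟨|g| + |g / (q:ℝ)| + 1, by positivity, ?_, ?_⟩
    · have h1 : g ≤ |g| := le_abs_self g
      have h2 : (0:ℝ) ≤ |g / (q:ℝ)| := abs_nonneg _
      linarith
    · have h1 : g / (q:ℝ) ≤ |g / (q:ℝ)| := le_abs_self _
      have h2 : (0:ℝ) ≤ |g| := abs_nonneg _
      linarith
  set F := (hfin b).toFinset with hF
  have memF : ∀ t : ℝ, t ∈ F ↔ t ∈ x.support ∧ t ≤ b := by
    intro t; rw [hF, Set.Finite.mem_toFinset]; rfl
  set x₁ : HahnSeries ℝ k := ∑ s ∈ F, single s (x.coeff s) with hx1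
  have hco1 : ∀ t, x₁.coeff t = if t ∈ F then x.coeff t else 0 := by
    intro t
    rw [hx1, coeff_sum]
    rw [Finset.sum_congr rfl (fun s _ => coeff_single (a := s) (b := t) (r := x.coeff s))]
    exact Finset.sum_ite_eq F t (fun s => x.coeff s)
  have key : ∀ t, t ≤ b → x₁.coeff t = x.coeff t := by
    intro t ht
    rw [hco1]
    by_cases hmem : t ∈ F
    · simp [hmem]
    · have : t ∉ x.support := fun hsup => hmem ((memF t).mpr ⟨hsup, ht⟩)
      simp only [hmem, if_false]
      exact (Function.notMem_support.mp this).symm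
  set x₂ : HahnSeries ℝ k := x - x₁ with hx2def
  have hx2 : ∀ t ∈ x₂.support, b < t := by
    intro t ht
    by_contra hle
    push_neg at hle
    have : x₂.coeff t = 0 := by rw [hx2def, coeff_sub, key t hle, sub_self]
    exact ht this
  have hsupp_pow : ∀ n : ℕ, 1 ≤ n → ∀ t ∈ (x₂ ^ n).support, b < t := by
    intro n
    induction n with
    | zero => omega
    | succ m ih =>
      intro _ t ht
      by_cases hm : m = 0
      · subst hm; simpa using hx2 t (by simpa using ht)
      · have hm1 : 1 ≤ m := Nat.one_le_iff_ne_zero.mpr hm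
        rw [pow_succ] at ht
        obtain ⟨i, hi, j, hj, rfl⟩ := support_mul_subset ht
        have h1 := ih hm1 i hi
        have h2 := hx2 j hj
        show b < i + j
        linarith
  have hx2q : (x₂ ^ q).coeff g = 0 := by
    by_contra hne
    exact absurd (hsupp_pow q hq0 g hne) (not_lt.mpr hbg.le)
  have hsplit : x₁ + x₂ = x := by rw [hx2def]; ring
  have hstep : (x ^ q).coeff g = (x₁ ^ q).coeff g := by
    rw [← hsplit, add_pow_q hqe, coeff_add, hx2q, add_zero]
  rw [hstep, hx1, sum_pow_q hqe]
  have hsingle : ∀ s : ℝ,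
      (single s (x.coeff s)) ^ q = single ((q : ℕ) • s) ((x.coeff s) ^ q) :=
    fun s => single_pow s q (x.coeff s)
  rw [Finset.sum_congr rfl (fun s _ => hsingle s), coeff_sum]
  have hcoe : ∀ s : ℝ, (single ((q : ℕ) • s) ((x.coeff s) ^ q)).coeff g
      = if g / (q : ℝ) = s then (x.coeff s) ^ q else 0 := by
    intro s
    rw [coeff_single]
    have hiff : (g = (q : ℕ) • s) ↔ (g / (q : ℝ) = s) := by
      rw [nsmul_eq_mul, div_eq_iff hqne]
      constructor
      · intro h; rw [h]; ring
      · intro h; rw [h]; ring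
    exact if_congr hiff rfl rfl
  rw [Finset.sum_congr rfl (fun s _ => hcoe s), Finset.sum_ite_eq F (g / (q:ℝ))]
  by_cases hmem : g / (q:ℝ) ∈ F
  · rw [if_pos hmem]
  · rw [if_neg hmem]
    have : x.coeff (g / (q:ℝ)) = 0 := by
      by_contra hne
      exact hmem ((memF _).mpr ⟨hne, hbgq.le⟩)
    rw [this, zero_pow hq0.ne']


section InM

variable {L : Type*} [AddCommGroup L] {Λ : L →+ ℝ}

lemma inM_of_subset {x : HahnSeries ℝ k} {A : Set ℝ} (hA1 : A ⊆ Set.range Λ)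
    (hA2 : ∀ r, (A ∩ Set.Iic r).Finite) (h : x.support ⊆ A) : InMonomialField Λ x :=
  ⟨h.trans hA1, fun r => (hA2 r).subset (Set.inter_subset_inter_left _ h)⟩

lemma inM_zero : InMonomialField Λ (0 : HahnSeries ℝ k) := by
  constructor <;> simp [HahnSeries.support_zero]

lemma inM_add {x y : HahnSeries ℝ k} (hx : InMonomialField Λ x)
    (hy : InMonomialField Λ y) : InMonomialField Λ (x + y) := by
  refine inM_of_subset (A := x.support ∪ y.support) (Set.union_subset hx.1 hy.1)
    (fun r => ?_) (support_add_subset x y)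
  rw [Set.union_inter_distrib_right]
  exact (hx.2 r).union (hy.2 r)

lemma inM_neg {x : HahnSeries ℝ k} (hx : InMonomialField Λ x) :
    InMonomialField Λ (-x) := by
  refine ⟨?_, ?_⟩ <;> rw [HahnSeries.support_neg] <;> [exact hx.1; exact hx.2]

lemma inM_sub {x y : HahnSeries ℝ k} (hx : InMonomialField Λ x)
    (hy : InMonomialField Λ y) : InMonomialField Λ (x - y) := by
  rw [sub_eq_add_neg]; exact inM_add hx (inM_neg hy)

lemma inM_single (z : L) (c : k) : InMonomialField Λ (single (Λ z) c) := by
  refine inM_of_subset (A := {Λ z}) ?_ (fun r => (Set.finite_singleton _).subset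
    (Set.inter_subset_left)) support_single_subset
  simp

lemma inM_sum {α : Type*} (F : Finset α) (f : α → HahnSeries ℝ k)
    (h : ∀ s ∈ F, InMonomialField Λ (f s)) :
    InMonomialField Λ (∑ s ∈ F, f s) := by
  classical
  induction F using Finset.induction with
  | empty => simpa using inM_zero
  | insert _ _ hnotmem ih =>
    rw [Finset.sum_insert hnotmem]
    exact inM_add (h _ (Finset.mem_insert_self _ _))
      (ih fun s hs => h s (Finset.mem_insert_of_mem hs))

lemma mem_support_pow_q {q e : ℕ} (hqe : q = p ^ e) (x : HahnSeries ℝ k)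
    (hfin : ∀ r : ℝ, (x.support ∩ Set.Iic r).Finite) (t : ℝ) :
    t ∈ (x ^ q).support ↔ t / q ∈ x.support := by
  have hq0 : q ≠ 0 := by subst hqe; exact (pow_pos (Nat.Prime.pos Fact.out) e).ne'
  constructor
  · intro ht
    rw [HahnSeries.mem_support, coeff_pow_q hqe x hfin t] at ht
    intro h0
    exact ht (by rw [h0, zero_pow hq0])
  · intro ht
    rw [HahnSeries.mem_support, coeff_pow_q hqe x hfin t]
    exact pow_ne_zero _ ht

lemma inM_pow_q {q e : ℕ} (hqe : q = p ^ e) {x : HahnSeries ℝ k}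
    (hx : InMonomialField Λ x) : InMonomialField Λ (x ^ q) := by
  have hq0 : 0 < q := hqe ▸ pow_pos (Nat.Prime.pos Fact.out) e
  have hqR : (0 : ℝ) < q := by exact_mod_cast hq0
  constructor
  · intro t ht
    rw [mem_support_pow_q hqe x hx.2] at ht
    obtain ⟨z, hz⟩ := hx.1 ht
    refine ⟨q • z, ?_⟩
    rw [map_nsmul, hz, nsmul_eq_mul, mul_div_cancel₀ _ (ne_of_gt hqR)]
  · intro r
    have hsub : (x ^ q).support ∩ Set.Iic r ⊆
        (fun s => (q : ℝ) * s) '' (x.support ∩ Set.Iic (r / q)) := by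
      intro t ⟨ht, htr⟩
      rw [mem_support_pow_q hqe x hx.2] at ht
      refine ⟨t / q, ⟨ht, ?_⟩, mul_div_cancel₀ _ (ne_of_gt hqR)⟩
      rw [Set.mem_Iic] at htr ⊢
      gcongr
    exact (((hx.2 (r / q)).image _).subset hsub)

lemma exists_order {x : HahnSeries ℝ k} (hx : InMonomialField Λ x) (hne : x ≠ 0) :
    ∃ m ∈ x.support, ∀ s ∈ x.support, m ≤ s :=
  exists_min_of_iic_finite hx.2 (support_nonempty_iff.mpr hne)

end InM


section Geom

variable {L : Type*} [AddCommGroup L] {Λ : L →+ ℝ}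

lemma exists_AS_of_pos {q e : ℕ} (hqe : q = p ^ e) (he : 0 < e) {w : HahnSeries ℝ k}
    (hw : InMonomialField Λ w) (hpos : ∀ s ∈ w.support, 0 < s) :
    ∃ b : HahnSeries ℝ k, InMonomialField Λ b ∧ b ^ q - b = w := by
  have hq0 : 0 < q := hqe ▸ pow_pos (Nat.Prime.pos Fact.out) e
  have hq2 : 2 ≤ q := by
    subst hqe
    exact le_trans (Nat.Prime.two_le Fact.out) (Nat.le_self_pow he.ne' p)
  have hq1 : (1 : ℝ) < q := by exact_mod_cast hq2
  have hqR : (0 : ℝ) < q := by exact_mod_cast hq0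
  rcases eq_or_ne w 0 with rfl | hne
  · exact ⟨0, inM_zero, by rw [zero_pow hq0.ne', sub_zero]⟩
  obtain ⟨δ, hδmem, hδmin⟩ := exists_order hw hne
  have hδ0 : 0 < δ := hpos δ hδmem
  -- basic facts about the powers w ^ q ^ n
  have hfin_n : ∀ n : ℕ, InMonomialField Λ (w ^ q ^ n) := by
    intro n
    induction n with
    | zero => simpa using hw
    | succ m ih => rw [pow_succ, pow_mul]; exact inM_pow_q hqe ih
  have hsup_iff : ∀ n : ℕ, ∀ t : ℝ, t ∈ (w ^ q ^ n).support ↔ t / (q : ℝ) ^ n ∈ w.support := by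
    intro n
    induction n with
    | zero => intro t; simp
    | succ m ih =>
      intro t
      rw [pow_succ, pow_mul, mem_support_pow_q hqe _ (hfin_n m).2, ih (t / q)]
      rw [div_div, ← pow_succ']
  have hlow : ∀ n : ℕ, ∀ t : ℝ, t ∈ (w ^ q ^ n).support → δ * (q : ℝ) ^ n ≤ t := by
    intro n t ht
    rw [hsup_iff n t] at ht
    have h1 := hδmin _ ht
    have h2 : (0:ℝ) < (q:ℝ) ^ n := pow_pos hqR n
    rw [le_div_iff₀ h2] at h1
    linarith
  have hTfin : ∀ C : ℝ, {n : ℕ | δ * (q : ℝ) ^ n ≤ C}.Finite := by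
    intro C
    obtain ⟨N, hN⟩ := pow_unbounded_of_one_lt (C / δ) hq1
    refine (Set.finite_Iio N).subset (fun n hn => ?_)
    rw [Set.mem_setOf_eq] at hn
    rw [Set.mem_Iio]
    by_contra hge
    push_neg at hge
    have : (q:ℝ) ^ N ≤ (q:ℝ) ^ n := pow_le_pow_right₀ hq1.le hge
    have hn' : (q:ℝ) ^ n ≤ C / δ := by
      rw [le_div_iff₀ hδ0]; linarith [mul_comm δ ((q:ℝ)^n)]
    linarith
  have hUiic : ∀ r : ℝ, ((⋃ n : ℕ, (w ^ q ^ n).support) ∩ Set.Iic r).Finite := by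
    intro r
    have hsub : (⋃ n : ℕ, (w ^ q ^ n).support) ∩ Set.Iic r ⊆
        ⋃ n ∈ {n : ℕ | δ * (q : ℝ) ^ n ≤ r}, ((w ^ q ^ n).support ∩ Set.Iic r) := by
      rintro t ⟨htU, htr⟩
      obtain ⟨n, hn⟩ := Set.mem_iUnion.mp htU
      exact Set.mem_biUnion (le_trans (hlow n t hn) htr) ⟨hn, htr⟩
    exact (Set.Finite.biUnion (hTfin r) (fun n _ => (hfin_n n).2 r)).subset hsub
  have hCo : ∀ g : ℝ, {n : ℕ | ((fun n : ℕ => w ^ q ^ n) n).coeff g ≠ 0}.Finite := by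
    intro g
    refine (hTfin g).subset (fun n hn => ?_)
    exact hlow n g hn
  let G : SummableFamily ℝ k ℕ :=
    ⟨fun n : ℕ => w ^ q ^ n, isPWO_of_iic_finite hUiic, hCo⟩
  have hGapp : ∀ n : ℕ, G n = w ^ q ^ n := fun n => rfl
  refine ⟨-G.hsum, ?_, ?_⟩
  · refine inM_neg (inM_of_subset (A := ⋃ n : ℕ, (w ^ q ^ n).support) ?_ hUiic
      SummableFamily.support_hsum_subset)
    intro t ht
    obtain ⟨n, hn⟩ := Set.mem_iUnion.mp ht
    exact (hfin_n n).1 hn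
  · have hbIic : ∀ r : ℝ, ((-G.hsum).support ∩ Set.Iic r).Finite := by
      intro r
      refine (hUiic r).subset (Set.inter_subset_inter_left _ ?_)
      rw [HahnSeries.support_neg]
      exact SummableFamily.support_hsum_subset
    ext g
    rw [coeff_sub, coeff_pow_q hqe _ hbIic g]
    have hcb : ∀ t : ℝ, (-G.hsum).coeff t = -∑ᶠ n : ℕ, (w ^ q ^ n).coeff t := by
      intro t
      rw [coeff_neg, SummableFamily.coeff_hsum]
      rfl
    have hphi : ∀ t : k, t ^ q = iterateFrobenius k p e t := fun t => by
      rw [iterateFrobenius_def, hqe]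
    have hpowsum : (∑ᶠ n : ℕ, (w ^ q ^ n).coeff (g / q)) ^ q
        = ∑ᶠ n : ℕ, ((w ^ q ^ n).coeff (g / q)) ^ q := by
      rw [hphi]
      exact ((iterateFrobenius k p e).toAddMonoidHom.map_finsum
        (G.finite_co_support (g / q))).trans (finsum_congr fun n => (hphi _).symm)
    have hshiftterm : ∀ n : ℕ, ((w ^ q ^ n).coeff (g / q)) ^ q = (w ^ q ^ (n+1)).coeff g := by
      intro n
      rw [← coeff_pow_q hqe _ (hfin_n n).2 g, ← pow_mul, ← pow_succ]
    rw [hcb, hcb, neg_pow_q_k hqe, hpowsum]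
    rw [finsum_congr hshiftterm]
    have hshift : ∑ᶠ n : ℕ, (w ^ q ^ n).coeff g
        = (w ^ q ^ 0).coeff g + ∑ᶠ n : ℕ, (w ^ q ^ (n + 1)).coeff g :=
      finsum_nat_shift _ (G.finite_co_support g)
    rw [hshift]
    simp only [pow_zero, pow_one]
    ring

end Geom


section Const

variable {L : Type*} [AddCommGroup L] {Λ : L →+ ℝ}

lemma single_sub' (a : ℝ) (r s : k) :
    single a (r - s) = single a r - single a s := by
  ext g
  rw [coeff_sub, coeff_single, coeff_single, coeff_single]
  split <;> simp

lemma single_pow_q {q e : ℕ} (hqe : q = p ^ e) (a : ℝ) (r : k) :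
    (single a r) ^ q = single ((q : ℝ) * a) (r ^ q) := by
  rw [single_pow, nsmul_eq_mul]

lemma exists_AS_const [IsAlgClosed k] {q e : ℕ} (hqe : q = p ^ e) (he : 0 < e) (c : k) :
    ∃ d : k, d ^ q - d = c := by
  have hq0 : 0 < q := hqe ▸ pow_pos (Nat.Prime.pos Fact.out) e
  have hq2 : 2 ≤ q := by
    subst hqe
    exact le_trans (Nat.Prime.two_le Fact.out) (Nat.le_self_pow he.ne' p)
  have hdeg1 : (Polynomial.X + Polynomial.C c : Polynomial k).degree ≤ 1 :=
    le_trans (Polynomial.degree_add_le _ _)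
      (max_le Polynomial.degree_X_le (le_trans Polynomial.degree_C_le (by norm_num)))
  have hdegX : ((Polynomial.X : Polynomial k) ^ q).degree = q := Polynomial.degree_X_pow q
  have hlt : (Polynomial.X + Polynomial.C c : Polynomial k).degree
      < ((Polynomial.X : Polynomial k) ^ q).degree := by
    rw [hdegX]
    refine lt_of_le_of_lt hdeg1 ?_
    exact_mod_cast hq2
  have hdeg : ((Polynomial.X : Polynomial k) ^ q - (Polynomial.X + Polynomial.C c)).degree
      = (q : WithBot ℕ) := by
    rw [Polynomial.degree_sub_eq_left_of_degree_lt hlt, hdegX]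
  obtain ⟨d, hd⟩ := IsAlgClosed.exists_root
    ((Polynomial.X : Polynomial k) ^ q - (Polynomial.X + Polynomial.C c))
    (by rw [hdeg]; exact_mod_cast hq0.ne')
  refine ⟨d, ?_⟩
  have := hd
  simp only [Polynomial.IsRoot, Polynomial.eval_sub, Polynomial.eval_pow,
    Polynomial.eval_X, Polynomial.eval_add, Polynomial.eval_C] at this
  linear_combination this

lemma coeff_truncsum (F : Finset ℝ) (w : HahnSeries ℝ k) (t : ℝ) :
    (∑ s ∈ F, single s (w.coeff s)).coeff t = if t ∈ F then w.coeff t else 0 := by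
  rw [coeff_sum]
  rw [Finset.sum_congr rfl (fun s _ => coeff_single (a := s) (b := t) (r := w.coeff s))]
  exact Finset.sum_ite_eq F t (fun s => w.coeff s)

lemma exists_AS_of_nonneg [IsAlgClosed k] {q e : ℕ} (hqe : q = p ^ e) (he : 0 < e)
    {w : HahnSeries ℝ k} (hw : InMonomialField Λ w) (hpos : ∀ s ∈ w.support, 0 ≤ s) :
    ∃ b : HahnSeries ℝ k, InMonomialField Λ b ∧ b ^ q - b = w := by
  obtain ⟨d, hd⟩ := exists_AS_const hqe he (w.coeff 0)
  set w' := w - single 0 (w.coeff 0) with hw'def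
  have hw' : InMonomialField Λ w' := by
    refine inM_sub hw ?_
    have := inM_single (Λ := Λ) (0 : L) (w.coeff 0)
    rwa [map_zero] at this
  have hpos' : ∀ s ∈ w'.support, 0 < s := by
    intro s hs
    rcases lt_trichotomy s 0 with hlt | rfl | hgt
    · exfalso
      have h1 : w.coeff s = 0 := by
        by_contra hne
        exact absurd (hpos s hne) (not_le.mpr hlt)
      have : w'.coeff s = 0 := by
        rw [hw'def, coeff_sub, h1, coeff_single_of_ne hlt.ne, sub_zero]
      exact hs this
    · exfalso
      have : w'.coeff 0 = 0 := by
        rw [hw'def, coeff_sub, coeff_single_same, sub_self]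
      exact hs this
    · exact hgt
  obtain ⟨b', hb', heq'⟩ := exists_AS_of_pos hqe he hw' hpos'
  refine ⟨b' + single 0 d, inM_add hb' (by simpa using inM_single (Λ := Λ) (0 : L) d), ?_⟩
  have hu : (single (0:ℝ) d) ^ q - single (0:ℝ) d = single (0:ℝ) (w.coeff 0) := by
    rw [single_pow_q hqe, mul_zero, ← hd, single_sub' 0 (d ^ q) d]
  rw [add_pow_q hqe]
  calc b' ^ q + (single (0:ℝ) d) ^ q - (b' + single 0 d)
      = (b' ^ q - b') + ((single (0:ℝ) d) ^ q - single 0 d) := by ring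
    _ = w' + single (0:ℝ) (w.coeff 0) := by rw [heq', hu]
    _ = w := by rw [hw'def]; ring

end Const


section Lattice

variable {L : Type*} [AddCommGroup L] [Module.Free ℤ L] [Module.Finite ℤ L]

/-- The set of "irreducible negative" exponents: negative values `Λ z` with `z ∉ qL`. -/
def Sset (Λ : L →+ ℝ) (q : ℕ) : Set ℝ :=
  {r | r < 0 ∧ ∃ z : L, Λ z = r ∧ ¬ ∃ z' : L, z = q • z'}

/-- Coordinate size of a lattice element. -/
noncomputable def nu (z : L) : ℕ :=
  ∑ i, ((Module.Free.chooseBasis ℤ L).repr z i).natAbs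

lemma nu_eq_zero {z : L} (h : nu z = 0) : z = 0 := by
  set B := Module.Free.chooseBasis ℤ L with hB
  have hall : ∀ i, (B.repr z) i = 0 := by
    intro i
    have := (Finset.sum_eq_zero_iff.mp h) i (Finset.mem_univ i)
    exact Int.natAbs_eq_zero.mp this
  have : B.repr z = 0 := Finsupp.ext hall
  exact (LinearEquiv.map_eq_zero_iff B.repr).mp this

lemma nu_smul (q : ℕ) (z : L) : nu ((q : ℕ) • z) = q * nu z := by
  set B := Module.Free.chooseBasis ℤ L with hB
  unfold nu
  rw [Finset.mul_sum]
  refine Finset.sum_congr rfl (fun i _ => ?_)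
  have h1 : (B.repr (q • z)) i = (q : ℤ) * (B.repr z) i := by
    rw [map_nsmul, Finsupp.smul_apply, nsmul_eq_mul]
  rw [h1, Int.natAbs_mul, Int.natAbs_natCast]

variable {Λ : L →+ ℝ}

lemma monomial_reduce [IsAlgClosed k] {q e : ℕ} (hqe : q = p ^ e) (he : 0 < e) :
    ∀ n : ℕ, ∀ z : L, nu z ≤ n → Λ z < 0 → ∀ c : k,
    ∃ N b : HahnSeries ℝ k, InMonomialField Λ N ∧ InMonomialField Λ b ∧
      single (Λ z) c - N = b ^ q - b ∧ N.support ⊆ Sset Λ q ∧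
      ∀ t ∈ N.support, ∃ j : ℕ, Λ z = (q : ℝ) ^ j * t := by
  have hq0 : 0 < q := hqe ▸ pow_pos (Nat.Prime.pos Fact.out) e
  have hq2 : 2 ≤ q := by
    subst hqe
    exact le_trans (Nat.Prime.two_le Fact.out) (Nat.le_self_pow he.ne' p)
  intro n
  induction n with
  | zero =>
    intro z hν hneg c
    exfalso
    rw [nu_eq_zero (Nat.le_zero.mp hν), map_zero] at hneg
    exact lt_irrefl 0 hneg
  | succ n ih =>
    intro z hν hneg c
    by_cases hdiv : ∃ z' : L, z = q • z'
    · obtain ⟨z', rfl⟩ := hdiv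
      have hΛz : Λ (q • z') = (q : ℝ) * Λ z' := by rw [map_nsmul, nsmul_eq_mul]
      have hneg' : Λ z' < 0 := by
        by_contra hge
        push_neg at hge
        have : (0:ℝ) ≤ (q:ℝ) * Λ z' := mul_nonneg (by positivity) hge
        rw [hΛz] at hneg
        linarith
      have hz'0 : z' ≠ 0 := fun h => by
        rw [h, map_zero] at hneg'; exact lt_irrefl 0 hneg'
      have hν' : nu z' ≤ n := by
        have h1 := nu_smul (L := L) q z'
        have h2 : nu z' ≠ 0 := fun h => hz'0 (nu_eq_zero h)
        rw [h1] at hν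
        have h3 : 2 * nu z' ≤ q * nu z' := Nat.mul_le_mul_right _ hq2
        omega
      obtain ⟨d, hd⟩ := IsAlgClosed.exists_pow_nat_eq c hq0
      obtain ⟨N, b, hN, hb, heq, hsupp, htrack⟩ := ih z' hν' hneg' d
      refine ⟨N, b + single (Λ z') d, hN, inM_add hb (inM_single z' d), ?_, hsupp, ?_⟩
      · rw [add_pow_q hqe, single_pow_q hqe, hd, ← hΛz]
        linear_combination heq
      · intro t ht
        obtain ⟨j, hj⟩ := htrack t ht
        exact ⟨j + 1, by rw [hΛz, hj]; ring⟩
    · refine ⟨single (Λ z) c, 0, inM_single z c, inM_zero, ?_, ?_, ?_⟩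
      · rw [sub_self, zero_pow hq0.ne', sub_zero]
      · intro t ht
        have h1 : t = Λ z := Set.mem_singleton_iff.mp (support_single_subset ht)
        exact ⟨h1 ▸ hneg, z, h1.symm, hdiv⟩
      · intro t ht
        have h1 : t = Λ z := Set.mem_singleton_iff.mp (support_single_subset ht)
        exact ⟨0, by rw [h1, pow_zero, one_mul]⟩

end Lattice


section Reduce

variable {L : Type*} [AddCommGroup L] [Module.Free ℤ L] [Module.Finite ℤ L]
variable {Λ : L →+ ℝ}

lemma support_sum_subset' {α : Type*} (F : Finset α) (f : α → HahnSeries ℝ k) {t : ℝ}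
    (ht : t ∈ (∑ s ∈ F, f s).support) : ∃ s ∈ F, t ∈ (f s).support := by
  rw [HahnSeries.mem_support, coeff_sum] at ht
  obtain ⟨s, hs, hne⟩ := Finset.exists_ne_zero_of_sum_ne_zero ht
  exact ⟨s, hs, hne⟩

lemma reduce [IsAlgClosed k] {q e : ℕ} (hqe : q = p ^ e) (he : 0 < e)
    {w : HahnSeries ℝ k} (hw : InMonomialField Λ w) :
    ∃ N b : HahnSeries ℝ k, InMonomialField Λ N ∧ InMonomialField Λ b ∧
      w - N = b ^ q - b ∧ N.support ⊆ Sset Λ q ∧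
      ∀ t ∈ N.support, ∃ s ∈ w.support, ∃ j : ℕ, s = (q : ℝ) ^ j * t := by
  classical
  have hFfin : (w.support ∩ Set.Iio 0).Finite :=
    (hw.2 0).subset (Set.inter_subset_inter_right _ Set.Iio_subset_Iic_self)
  set F := hFfin.toFinset with hFdef
  have memF : ∀ t : ℝ, t ∈ F ↔ t ∈ w.support ∧ t < 0 := by
    intro t; rw [hFdef, Set.Finite.mem_toFinset]; rfl
  set wm : HahnSeries ℝ k := ∑ s ∈ F, single s (w.coeff s) with hwm
  have hwmco : ∀ t, wm.coeff t = if t ∈ F then w.coeff t else 0 := fun t =>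
    coeff_truncsum F w t
  have hInMwm : InMonomialField Λ wm := by
    refine inM_sum F _ (fun s hs => ?_)
    obtain ⟨z, hz⟩ := hw.1 ((memF s).mp hs).1
    subst hz; exact inM_single z _
  set wp : HahnSeries ℝ k := w - wm with hwp
  have hInMwp : InMonomialField Λ wp := inM_sub hw hInMwm
  have hwppos : ∀ s ∈ wp.support, 0 ≤ s := by
    intro s hs
    by_contra hneg
    push_neg at hneg
    have : wp.coeff s = 0 := by
      rw [hwp, coeff_sub, hwmco]
      by_cases hmem : s ∈ F
      · rw [if_pos hmem, sub_self]
      · rw [if_neg hmem, sub_zero]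
        by_contra hne
        exact hmem ((memF s).mpr ⟨hne, hneg⟩)
    exact hs this
  obtain ⟨bp, hbp, heqp⟩ := exists_AS_of_nonneg hqe he hInMwp hwppos
  have hex : ∀ s : ℝ, s ∈ F → ∀ c : k,
      ∃ Nb : HahnSeries ℝ k × HahnSeries ℝ k, InMonomialField Λ Nb.1 ∧
        InMonomialField Λ Nb.2 ∧ single s c - Nb.1 = Nb.2 ^ q - Nb.2 ∧
        Nb.1.support ⊆ Sset Λ q ∧ ∀ t ∈ Nb.1.support, ∃ j : ℕ, s = (q : ℝ) ^ j * t := by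
    intro s hs c
    obtain ⟨hsup, hsneg⟩ := (memF s).mp hs
    obtain ⟨z, hz⟩ := hw.1 hsup
    obtain ⟨N, b, h1, h2, h3, h4, h5⟩ :=
      monomial_reduce hqe he (nu z) z le_rfl (by rw [hz]; exact hsneg) c
    exact ⟨(N, b), h1, h2, by rw [← hz]; exact h3, h4, fun t ht => by
      rw [← hz]; exact h5 t ht⟩
  choose Nb hN hb hASeq hSsub htrk using hex
  set N : HahnSeries ℝ k := ∑ s ∈ F.attach, (Nb s.1 s.2 (w.coeff s.1)).1 with hNdef
  set B : HahnSeries ℝ k := bp + ∑ s ∈ F.attach, (Nb s.1 s.2 (w.coeff s.1)).2 with hBdef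
  have hInMN : InMonomialField Λ N :=
    inM_sum _ _ (fun s _ => hN s.1 s.2 (w.coeff s.1))
  have hInMB : InMonomialField Λ B :=
    inM_add hbp (inM_sum _ _ (fun s _ => hb s.1 s.2 (w.coeff s.1)))
  refine ⟨N, B, hInMN, hInMB, ?_, ?_, ?_⟩
  · have hwmN : wm - N = (∑ s ∈ F.attach, (Nb s.1 s.2 (w.coeff s.1)).2) ^ q
        - ∑ s ∈ F.attach, (Nb s.1 s.2 (w.coeff s.1)).2 := by
      rw [sum_pow_q hqe, ← Finset.sum_sub_distrib]
      have hwm' : wm = ∑ s ∈ F.attach, single s.1 (w.coeff s.1) := by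
        rw [hwm]
        exact (Finset.sum_attach F (fun s => single s (w.coeff s))).symm
      rw [hwm', hNdef, ← Finset.sum_sub_distrib]
      exact Finset.sum_congr rfl (fun s _ => hASeq s.1 s.2 (w.coeff s.1))
    have hw' : w = wp + wm := by rw [hwp]; ring
    rw [hw', hBdef, add_pow_q hqe]
    linear_combination hwmN - heqp
  · intro t ht
    obtain ⟨s, _, hts⟩ := support_sum_subset' _ _ ht
    exact hSsub s.1 s.2 (w.coeff s.1) hts
  · intro t ht
    obtain ⟨s, _, hts⟩ := support_sum_subset' _ _ ht
    obtain ⟨j, hj⟩ := htrk s.1 s.2 (w.coeff s.1) t hts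
    exact ⟨s.1, ((memF s.1).mp s.2).1, j, hj⟩

lemma reduced_unique {q e : ℕ} (hqe : q = p ^ e) (he : 0 < e) (hΛ : Function.Injective Λ)
    {N₁ N₂ u : HahnSeries ℝ k} (hu : InMonomialField Λ u)
    (h1 : N₁.support ⊆ Sset Λ q) (h2 : N₂.support ⊆ Sset Λ q)
    (heq : N₁ - N₂ = u ^ q - u) : N₁ = N₂ := by
  have hq0 : 0 < q := hqe ▸ pow_pos (Nat.Prime.pos Fact.out) e
  have hq2 : 2 ≤ q := by
    subst hqe
    exact le_trans (Nat.Prime.two_le Fact.out) (Nat.le_self_pow he.ne' p)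
  have hq1 : (1:ℝ) < q := by exact_mod_cast hq2
  by_contra hne
  have hdne : N₁ - N₂ ≠ 0 := sub_ne_zero_of_ne hne
  have hdsupp : (N₁ - N₂).support ⊆ Sset Λ q := by
    intro t ht
    rw [HahnSeries.mem_support, coeff_sub] at ht
    by_cases hmem : N₁.coeff t ≠ 0
    · exact h1 hmem
    · push_neg at hmem
      refine h2 (fun h0 => ht ?_)
      rw [hmem, h0, sub_zero]
  -- the support of N₁ - N₂ consists of negative reals
  have hdneg : ∀ t ∈ (N₁ - N₂).support, t < 0 := fun t ht => (hdsupp ht).1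
  -- u must have some negative support element
  have huneg : ∃ s ∈ u.support, s < 0 := by
    by_contra hno
    push_neg at hno
    obtain ⟨t, ht⟩ := support_nonempty_iff.mpr hdne
    have htneg := hdneg t ht
    have : (N₁ - N₂).coeff t = 0 := by
      rw [heq, coeff_sub, coeff_pow_q hqe u hu.2]
      have e1 : u.coeff (t / q) = 0 := by
        by_contra hc
        have := hno _ hc
        have ht2 : t / q < 0 := div_neg_of_neg_of_pos htneg (by exact_mod_cast hq0)
        linarith
      have e2 : u.coeff t = 0 := by
        by_contra hc
        exact absurd (hno _ hc) (not_le.mpr htneg)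
      rw [e1, e2, zero_pow hq0.ne', sub_zero]
    exact ht this
  have hfin : ((u.support ∩ Set.Iio 0) : Set ℝ).Finite :=
    (hu.2 0).subset (Set.inter_subset_inter_right _ Set.Iio_subset_Iic_self)
  obtain ⟨s₀, hs₀, hs₀min⟩ := exists_min_of_iic_finite
    (fun r => (hu.2 r).subset (Set.inter_subset_inter_left _ Set.inter_subset_left))
    (by obtain ⟨s, h1', h2'⟩ := huneg; exact ⟨s, h1', h2'⟩ :
      ((u.support ∩ Set.Iio 0) : Set ℝ).Nonempty)
  obtain ⟨hs₀supp, hs₀neg⟩ := hs₀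
  have hs₀neg' : s₀ < 0 := hs₀neg
  have hqs₀ : (q : ℝ) * s₀ < s₀ := by nlinarith [mul_pos (sub_pos.mpr hq1) (neg_pos.mpr hs₀neg')]
  have hcoeff : (N₁ - N₂).coeff ((q:ℝ) * s₀) ≠ 0 := by
    rw [heq, coeff_sub, coeff_pow_q hqe u hu.2]
    have e1 : ((q:ℝ) * s₀) / q = s₀ := by
      field_simp
    have e2 : u.coeff ((q:ℝ) * s₀) = 0 := by
      by_contra hc
      have hneg2 : (q:ℝ) * s₀ < 0 := mul_neg_of_pos_of_neg (by exact_mod_cast hq0) hs₀neg'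
      have := hs₀min _ ⟨hc, hneg2⟩
      linarith
    rw [e1, e2, sub_zero]
    exact pow_ne_zero _ hs₀supp
  -- so q * s₀ lies in Sset, but it is also q • (preimage of s₀), contradiction
  have hmem := hdsupp hcoeff
  obtain ⟨-, z, hz, hznd⟩ := hmem
  obtain ⟨z', hz'⟩ := hu.1 hs₀supp
  have : Λ z = Λ (q • z') := by
    rw [map_nsmul, nsmul_eq_mul, hz', hz]
  exact hznd ⟨z', hΛ this⟩

end Reduce

end Stmt5Aux

/-- Positioning lemma: in the monomial field `E = k((L))_λ` over an algebraically
closed field `k` of characteristic `p > 0` (`q` a power of `p`), if `x ∈ E` cannot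
be written as `a^q − a`, then there is `c > 0` such that for every `i ≥ 0` and
every `y ∈ E` with `x − y + y^q` supported on `q^i·L`, one has
`v_λ(x − y + y^q) ≤ −c·q^i`. -/
theorem stmt_5 (p : ℕ) [Fact p.Prime] {k : Type*} [Field k] [IsAlgClosed k]
    [CharP k p] (f q : ℕ) (hf : 0 < f) (hq : q = p ^ f)
    {L : Type*} [AddCommGroup L] [Module.Free ℤ L] [Module.Finite ℤ L]
    (Λ : L →+ ℝ) (hΛ : Function.Injective Λ)
    (x : HahnSeries ℝ k) (hx : InMonomialField Λ x)
    (hnot : ¬ ∃ a : HahnSeries ℝ k, InMonomialField Λ a ∧ a ^ q - a = x) :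
    ∃ c : ℝ, 0 < c ∧ ∀ (i : ℕ) (y : HahnSeries ℝ k), InMonomialField Λ y →
      (x - y + y ^ q).support ⊆ Set.range (fun z : L => (q ^ i : ℕ) • Λ z) →
      (x - y + y ^ q).orderTop ≤ ((-(c * (q : ℝ) ^ i) : ℝ) : WithTop ℝ) := by
  classical
  have hq0 : 0 < q := hq ▸ pow_pos (Nat.Prime.pos Fact.out) f
  have hq2 : 2 ≤ q := by
    subst hq
    exact le_trans (Nat.Prime.two_le Fact.out) (Nat.le_self_pow hf.ne' p)
  have hq1R : (1 : ℝ) < q := by exact_mod_cast hq2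
  obtain ⟨N, b₀, hN, hb₀, heq₀, hSsub₀, htrk₀⟩ := Stmt5Aux.reduce hq hf hx
  rcases eq_or_ne N 0 with rfl | hNne
  · exact absurd ⟨b₀, hb₀, by rw [← heq₀, sub_zero]⟩ hnot
  obtain ⟨m, hm, hmmin⟩ := Stmt5Aux.exists_order hN hNne
  have hmS := hSsub₀ hm
  have hmneg : m < 0 := hmS.1
  refine ⟨-m, by linarith, ?_⟩
  intro i y hy hsup
  by_contra hcon
  push_neg at hcon
  set w : HahnSeries ℝ k := x - y + y ^ q with hwdef
  have hwInM : InMonomialField Λ w :=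
    Stmt5Aux.inM_add (Stmt5Aux.inM_sub hx hy) (Stmt5Aux.inM_pow_q hq hy)
  have hwlow : ∀ s ∈ w.support, -(-m * (q : ℝ) ^ i) < s := by
    intro s hs
    have h1 : w.orderTop ≤ (s : WithTop ℝ) := HahnSeries.orderTop_le_of_coeff_ne_zero hs
    have h2 := lt_of_lt_of_le hcon h1
    exact_mod_cast h2
  obtain ⟨N₁, b₁, hN₁, hb₁, heq₁, hSsub₁, htrk₁⟩ := Stmt5Aux.reduce hq hf hwInM
  have hasy : w - x = y ^ q - y := by rw [hwdef]; ring
  have hNN₁ : N₁ - N = (y + b₀ - b₁) ^ q - (y + b₀ - b₁) := by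
    have h1 : (y + b₀ - b₁) ^ q = y ^ q + b₀ ^ q - b₁ ^ q := by
      rw [sub_eq_add_neg, Stmt5Aux.add_pow_q hq, Stmt5Aux.add_pow_q hq,
        Stmt5Aux.neg_pow_q hq]
      ring
    rw [h1]
    linear_combination heq₀ - heq₁ + hasy
  have hInMu : InMonomialField Λ (y + b₀ - b₁) :=
    Stmt5Aux.inM_sub (Stmt5Aux.inM_add hy hb₀) hb₁
  have hN₁N : N₁ = N := Stmt5Aux.reduced_unique hq hf hΛ hInMu hSsub₁ hSsub₀ hNN₁
  obtain ⟨s, hsw, j, hsj⟩ := htrk₁ m (by rw [hN₁N]; exact hm)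
  obtain ⟨zm, hzm, hznd⟩ := hmS.2
  obtain ⟨u₀, hu₀⟩ := hsup hsw
  have hs_eq : Λ ((q ^ i : ℕ) • u₀) = s := by rw [map_nsmul]; exact hu₀
  have hs_eq2 : Λ ((q ^ j : ℕ) • zm) = s := by
    rw [map_nsmul, nsmul_eq_mul, hzm, hsj]; push_cast; ring
  have hij : i ≤ j := by
    by_contra hji
    push_neg at hji
    have hinj0 : (q ^ j : ℕ) • zm = (q ^ i : ℕ) • u₀ := hΛ (hs_eq2.trans hs_eq.symm)
    have hfac : (q ^ i : ℕ) • u₀ = (q ^ j : ℕ) • ((q ^ (i - j) : ℕ) • u₀) := by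
      rw [← mul_smul, ← _root_.pow_add]
      congr 2
      omega
    have hinj : (q ^ j : ℕ) • zm = (q ^ j : ℕ) • ((q ^ (i - j) : ℕ) • u₀) := by
      rw [hinj0, hfac]
    have hcan : zm = (q ^ (i - j) : ℕ) • u₀ := by
      have hqj : ((q ^ j : ℕ) : ℤ) ≠ 0 := by positivity
      rw [← natCast_zsmul, ← natCast_zsmul ((q ^ (i - j) : ℕ) • u₀)] at hinj
      exact smul_right_injective L hqj hinj
    refine hznd ⟨(q ^ (i - j - 1) : ℕ) • u₀, ?_⟩
    rw [hcan, ← mul_smul, ← pow_succ']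
    congr 2
    omega
  have hslow := hwlow s hsw
  have hpow : (q : ℝ) ^ i ≤ (q : ℝ) ^ j := pow_le_pow_right₀ hq1R.le hij
  have hmono : m * (q : ℝ) ^ j ≤ m * (q : ℝ) ^ i := by
    exact mul_le_mul_of_nonpos_left hpow hmneg.le
  rw [hsj] at hslow
  nlinarith [hslow, hmono]
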